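/- The generalized Sinkhorn coordinate update enforces its marginal constraint exactly: fix ℓ ∈ {1,…,n} and j ∈ I_ℓ, and fix strictly positive scalars α^{(m)}_i for all coordinates (m, i) ≠ (ℓ, j). Define S⁺ = Σ_{k : k_ℓ = j, X_k = +1} 𝐐_k · Π_{m ≠ ℓ} α^{(m)}_{k_m} and S⁻ = Σ_{k : k_ℓ = j, X_k = −1} 𝐐_k · Π_{m ≠ ℓ} (α^{(m)}_{k_m})^{−1}, and suppose S⁺ > 0. If α^{(ℓ)}_j is set equal to G(S⁺, S⁻, p^{(ℓ)}_j) = (p^{(ℓ)}_j + √((p^{(ℓ)}_j)² + 4·S⁺·S⁻))/(2·S⁺), then the array P defined by P_k = X_k·𝐐_k·Π_{m=1}^n (α^{(m)}_{k_m})^{X_k} satisfies Σ_{k : k_ℓ = j} P_k = p^{(ℓ)}_j. -/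

import Mathlib

open scoped BigOperators

/-- The generalized Sinkhorn coordinate update enforces its marginal
constraint exactly: with `S⁺`, `S⁻` the positive- and negative-sign partial sums of
the scaled prior at coordinate `(ℓ, j)`, `S⁺ > 0`, and
`α^{(ℓ)}_j = G(S⁺, S⁻, p^{(ℓ)}_j) = (p + √(p² + 4·S⁺·S⁻))/(2·S⁺)`, the array
`P_k = X_k·𝐐_k·Π_m (α^{(m)}_{k_m})^{X_k}` satisfies `Σ_{k : k_ℓ = j} P_k = p^{(ℓ)}_j`. -/
theorem generalized_sinkhorn_coordinate_update_enforces_marginal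
    (n : ℕ) (hn : 1 ≤ n) (I : Fin n → Type)
    [∀ ℓ, Fintype (I ℓ)] [∀ ℓ, Nonempty (I ℓ)] [∀ ℓ, DecidableEq (I ℓ)]
    (Q : (∀ ℓ, I ℓ) → ℝ) (hQ : ∀ k, 0 < Q k)
    (X : (∀ ℓ, I ℓ) → ℝ) (hX : ∀ k, X k = 1 ∨ X k = -1)
    (ℓ₀ : Fin n) (j₀ : I ℓ₀) (pval : ℝ) (hpval : 0 < pval)
    (α : ∀ m, I m → ℝ) (hα : ∀ m i, 0 < α m i)
    (hSp : 0 < ∑ k : ∀ ℓ, I ℓ,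
      (if k ℓ₀ = j₀ ∧ X k = 1 then
        Q k * ∏ m ∈ Finset.univ.erase ℓ₀, α m (k m) else 0))
    (hupd : α ℓ₀ j₀ =
      (pval + Real.sqrt (pval ^ 2 +
        4 * (∑ k : ∀ ℓ, I ℓ,
          (if k ℓ₀ = j₀ ∧ X k = 1 then
            Q k * ∏ m ∈ Finset.univ.erase ℓ₀, α m (k m) else 0)) *
          (∑ k : ∀ ℓ, I ℓ,
            (if k ℓ₀ = j₀ ∧ X k = -1 then
              Q k * ∏ m ∈ Finset.univ.erase ℓ₀, (α m (k m))⁻¹ else 0)))) /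
      (2 * ∑ k : ∀ ℓ, I ℓ,
        (if k ℓ₀ = j₀ ∧ X k = 1 then
          Q k * ∏ m ∈ Finset.univ.erase ℓ₀, α m (k m) else 0))) :
    ∑ k : ∀ ℓ, I ℓ,
      (if k ℓ₀ = j₀ then
        X k * Q k * (if X k = 1 then ∏ m, α m (k m) else (∏ m, α m (k m))⁻¹)
      else 0) = pval := by

  classical
  set Sp := ∑ k : ∀ ℓ, I ℓ,
      (if k ℓ₀ = j₀ ∧ X k = 1 then
        Q k * ∏ m ∈ Finset.univ.erase ℓ₀, α m (k m) else 0) with hSpdef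
  set Sm := ∑ k : ∀ ℓ, I ℓ,
      (if k ℓ₀ = j₀ ∧ X k = -1 then
        Q k * ∏ m ∈ Finset.univ.erase ℓ₀, (α m (k m))⁻¹ else 0) with hSmdef
  have hSm : 0 ≤ Sm := by
    apply Finset.sum_nonneg
    intro k _
    split_ifs
    · exact mul_nonneg (hQ k).le
        (Finset.prod_nonneg fun m _ => inv_nonneg.2 (hα m (k m)).le)
    · exact le_refl 0
  set a := α ℓ₀ j₀ with hadef
  have key : ∀ k : ∀ ℓ, I ℓ,
      (if k ℓ₀ = j₀ then
        X k * Q k * (if X k = 1 then ∏ m, α m (k m) else (∏ m, α m (k m))⁻¹)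
      else 0) =
      a * (if k ℓ₀ = j₀ ∧ X k = 1 then
        Q k * ∏ m ∈ Finset.univ.erase ℓ₀, α m (k m) else 0) -
      a⁻¹ * (if k ℓ₀ = j₀ ∧ X k = -1 then
        Q k * ∏ m ∈ Finset.univ.erase ℓ₀, (α m (k m))⁻¹ else 0) := by
    intro k
    have hsplit : ∏ m, α m (k m)
        = α ℓ₀ (k ℓ₀) * ∏ m ∈ Finset.univ.erase ℓ₀, α m (k m) :=
      (Finset.mul_prod_erase Finset.univ (fun m => α m (k m))
        (Finset.mem_univ ℓ₀)).symm
    by_cases hk : k ℓ₀ = j₀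
    · rcases hX k with h1 | h1
      · rw [if_pos hk, if_pos h1, if_pos ⟨hk, h1⟩,
          if_neg (by norm_num [h1] : ¬(k ℓ₀ = j₀ ∧ X k = -1)),
          hsplit, hk, h1]
        ring
      · have hne : X k ≠ 1 := by rw [h1]; norm_num
        rw [if_pos hk, if_neg hne, if_neg (fun h => hne h.2),
          if_pos ⟨hk, h1⟩, hsplit, hk, h1, mul_inv,
          Finset.prod_inv_distrib]
        ring
    · rw [if_neg hk, if_neg (fun h => hk h.1), if_neg (fun h => hk h.1)]
      ring
  rw [Finset.sum_congr rfl (fun k _ => key k), Finset.sum_sub_distrib,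
    ← Finset.mul_sum, ← Finset.mul_sum, ← hSpdef, ← hSmdef]
  set s := Real.sqrt (pval ^ 2 + 4 * Sp * Sm) with hsdef
  have harg : 0 ≤ pval ^ 2 + 4 * Sp * Sm := by nlinarith [sq_nonneg pval]
  have hs2 : s ^ 2 = pval ^ 2 + 4 * Sp * Sm := Real.sq_sqrt harg
  have hs0 : 0 ≤ s := Real.sqrt_nonneg _
  have ha : a = (pval + s) / (2 * Sp) := hupd
  have hapos : 0 < a := by rw [ha]; positivity
  rw [ha]
  field_simp
  nlinarith [hs2, hs0, hSp, hpval]
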